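/- arXiv:2002.05685 — 3 statements merged into one kernel-verified Lean document; each statement's English description precedes it below -/
import Mathlib

section
/- Kummer's transformation: for all reals a, b with b not a nonpositive integer and all real x, e^x · ₁F₁(a; b; -x) = ₁F₁(b - a; b; x). -/
open Real

/-- The Kummer confluent hypergeometric function ₁F₁(a; b; z), defined by its
power series with rising factorials (Pochhammer symbols). -/
noncomputable def kummer (a b z : ℝ) : ℝ :=
  ∑' n : ℕ, ((ascPochhammer ℝ n).eval a / (ascPochhammer ℝ n).eval b) * z ^ n / n.factorial

noncomputable def kTerm (a b z : ℝ) : ℕ → ℝ := fun n =>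
  ((ascPochhammer ℝ n).eval a / (ascPochhammer ℝ n).eval b) * z ^ n / n.factorial

lemma poch_ne_zero {b : ℝ} (hb : ∀ n : ℕ, b ≠ -(n : ℝ)) (k : ℕ) :
    (ascPochhammer ℝ k).eval b ≠ 0 := by
  induction k with
  | zero => simp
  | succ k ih =>
    rw [ascPochhammer_succ_eval]
    refine mul_ne_zero ih ?_
    intro h
    exact hb k (by linarith)

lemma poch_split (b : ℝ) {j n : ℕ} (hj : j ≤ n) :
    (ascPochhammer ℝ n).eval b =
      (ascPochhammer ℝ j).eval b * (ascPochhammer ℝ (n - j)).eval (b + j) := by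
  have := ascPochhammer_mul (S := ℝ) j (n - j)
  rw [Nat.add_sub_cancel' hj] at this
  rw [← this, Polynomial.eval_mul, Polynomial.eval_comp]
  simp


lemma poch_eval_succ_left (a : ℝ) (k : ℕ) :
    (ascPochhammer ℝ (k + 1)).eval a = a * (ascPochhammer ℝ k).eval (a + 1) := by
  rw [ascPochhammer_succ_left, Polynomial.eval_mul, Polynomial.eval_X, Polynomial.eval_comp]
  simp

lemma vand : ∀ (n : ℕ) (a b : ℝ),
    ∑ k ∈ Finset.range (n + 1), (-1 : ℝ) ^ k * (n.choose k) * (ascPochhammer ℝ k).eval a *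
      (ascPochhammer ℝ (n - k)).eval (b + k) = (ascPochhammer ℝ n).eval (b - a) := by
  intro n
  induction n with
  | zero => intro a b; simp
  | succ n ih =>
    intro a b
    rw [Finset.sum_range_succ']
    have hsplit : ∀ k ∈ Finset.range (n + 1),
        (-1 : ℝ) ^ (k + 1) * ((n + 1).choose (k + 1)) * (ascPochhammer ℝ (k + 1)).eval a *
          (ascPochhammer ℝ (n + 1 - (k + 1))).eval (b + (k + 1 : ℕ)) =
        ((-1 : ℝ) ^ (k + 1) * (n.choose (k + 1)) * (ascPochhammer ℝ (k + 1)).eval a *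
          (ascPochhammer ℝ (n + 1 - (k + 1))).eval (b + (k + 1 : ℕ)))
        + ((-1 : ℝ) ^ (k + 1) * (n.choose k) * (ascPochhammer ℝ (k + 1)).eval a *
          (ascPochhammer ℝ (n - k)).eval (b + (k + 1 : ℕ))) := by
      intro k _
      simp only [Nat.succ_sub_succ, Nat.choose_succ_succ]
      push_cast
      ring
    rw [Finset.sum_congr rfl hsplit, Finset.sum_add_distrib]
    have hB : ∑ k ∈ Finset.range (n + 1),
        (-1 : ℝ) ^ (k + 1) * (n.choose k) * (ascPochhammer ℝ (k + 1)).eval a *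
          (ascPochhammer ℝ (n - k)).eval (b + (k + 1 : ℕ)) =
        -a * (ascPochhammer ℝ n).eval (b - a) := by
      have hterm : ∀ k ∈ Finset.range (n + 1),
          (-1 : ℝ) ^ (k + 1) * (n.choose k) * (ascPochhammer ℝ (k + 1)).eval a *
            (ascPochhammer ℝ (n - k)).eval (b + (k + 1 : ℕ)) =
          -a * ((-1 : ℝ) ^ k * (n.choose k) * (ascPochhammer ℝ k).eval (a + 1) *
            (ascPochhammer ℝ (n - k)).eval ((b + 1) + k)) := by
        intro k _
        rw [poch_eval_succ_left]
        have : b + ((k : ℝ) + 1) = (b + 1) + k := by ring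
        push_cast
        rw [this]
        ring
      rw [Finset.sum_congr rfl hterm, ← Finset.mul_sum, ih (a + 1) (b + 1)]
      ring_nf
    rw [hB]
    -- first piece plus the k = 0 term
    have hA : (∑ k ∈ Finset.range (n + 1),
        (-1 : ℝ) ^ (k + 1) * (n.choose (k + 1)) * (ascPochhammer ℝ (k + 1)).eval a *
          (ascPochhammer ℝ (n + 1 - (k + 1))).eval (b + (k + 1 : ℕ)))
        + (-1 : ℝ) ^ 0 * ((n + 1).choose 0) * (ascPochhammer ℝ 0).eval a *
          (ascPochhammer ℝ (n + 1 - 0)).eval (b + (0 : ℕ)) =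
        (b + n) * (ascPochhammer ℝ n).eval (b - a) := by
      have h0 : (-1 : ℝ) ^ 0 * ((n + 1).choose 0) * (ascPochhammer ℝ 0).eval a *
          (ascPochhammer ℝ (n + 1 - 0)).eval (b + (0 : ℕ)) =
          (-1 : ℝ) ^ 0 * (n.choose 0) * (ascPochhammer ℝ 0).eval a *
          (ascPochhammer ℝ (n + 1 - 0)).eval (b + (0 : ℕ)) := by simp
      rw [h0, ← Finset.sum_range_succ' (fun k => (-1 : ℝ) ^ k * (n.choose k) *
          (ascPochhammer ℝ k).eval a * (ascPochhammer ℝ (n + 1 - k)).eval (b + k)) (n + 1)]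
      rw [Finset.sum_range_succ]
      simp only [Nat.choose_succ_self, Nat.cast_zero]
      have hw : ∀ k ∈ Finset.range (n + 1),
          (-1 : ℝ) ^ k * (n.choose k) * (ascPochhammer ℝ k).eval a *
            (ascPochhammer ℝ (n + 1 - k)).eval (b + k) =
          ((-1 : ℝ) ^ k * (n.choose k) * (ascPochhammer ℝ k).eval a *
            (ascPochhammer ℝ (n - k)).eval (b + k)) * (b + n) := by
        intro k hk
        have hk' : k ≤ n := Nat.lt_succ_iff.mp (Finset.mem_range.mp hk)
        have h1 : n + 1 - k = (n - k) + 1 := by omega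
        rw [h1, ascPochhammer_succ_eval]
        have h2 : b + (k : ℝ) + ((n - k : ℕ) : ℝ) = b + n := by
          rw [Nat.cast_sub hk']; ring
        rw [h2]; ring
      rw [Finset.sum_congr rfl hw, ← Finset.sum_mul, ih a b]
      ring
    rw [ascPochhammer_succ_eval]
    linear_combination hA



lemma kTerm_summable_norm (a b z : ℝ) (hb : ∀ k : ℕ, (ascPochhammer ℝ k).eval b ≠ 0) :
    Summable fun n => ‖kTerm a b z n‖ := by
  obtain ⟨N, hN⟩ := exists_nat_ge (2 * |a| + 2 * |b| + 8 * |z| + 2)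
  have key : ∀ᶠ n in Filter.atTop, ‖‖kTerm a b z (n + 1)‖‖ ≤ (1/2 : ℝ) * ‖‖kTerm a b z n‖‖ := by
    filter_upwards [Filter.eventually_ge_atTop N] with n hn
    have hn' : (2 * |a| + 2 * |b| + 8 * |z| + 2) ≤ (n : ℝ) :=
      hN.trans (Nat.cast_le.mpr hn)
    have ha0 : (0:ℝ) ≤ |a| := abs_nonneg a
    have hb0 : (0:ℝ) ≤ |b| := abs_nonneg b
    have hz0 : (0:ℝ) ≤ |z| := abs_nonneg z
    have hrec : kTerm a b z (n + 1) =
        kTerm a b z n * ((a + n) / (b + n) * (z / (n + 1))) := by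
      unfold kTerm
      rw [ascPochhammer_succ_eval, ascPochhammer_succ_eval, pow_succ, Nat.factorial_succ]
      have h1 : (ascPochhammer ℝ n).eval b ≠ 0 := hb n
      have h2 : (b + (n:ℝ)) ≠ 0 := by
        intro h
        apply hb (n + 1)
        rw [ascPochhammer_succ_eval, h, mul_zero]
      have h3 : ((n:ℝ) + 1) ≠ 0 := by positivity
      have h4 : ((n.factorial : ℝ)) ≠ 0 := Nat.cast_ne_zero.mpr n.factorial_ne_zero
      push_cast
      field_simp
    have hbn : (n : ℝ) - |b| ≤ |b + n| := by
      have h5 : |(n:ℝ)| ≤ |b + n| + |b| := by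
        calc |(n:ℝ)| = |(b + (n:ℝ)) + (-b)| := by rw [show (b + (n:ℝ)) + (-b) = (n:ℝ) by ring]
          _ ≤ |b + (n:ℝ)| + |(-b)| := abs_add_le _ _
          _ = |b + (n:ℝ)| + |b| := by rw [abs_neg]
      have h6 : |(n:ℝ)| = (n:ℝ) := abs_of_nonneg (Nat.cast_nonneg n)
      linarith
    have hbnpos : (0:ℝ) < |b + n| := by linarith
    have hratio : |(a + n) / (b + n) * (z / (n + 1))| ≤ 1/2 := by
      rw [abs_mul, abs_div, abs_div]
      have han : |a + (n:ℝ)| ≤ |a| + n := by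
        simpa [abs_of_nonneg (Nat.cast_nonneg n : (0:ℝ) ≤ n)] using abs_add_le a (n:ℝ)
      have hn1 : |((n:ℝ) + 1)| = (n:ℝ) + 1 := abs_of_pos (by positivity)
      rw [hn1, div_mul_div_comm, div_le_iff₀ (by positivity)]
      nlinarith [mul_le_mul_of_nonneg_right han hz0, mul_le_mul_of_nonneg_left hn' hz0]
    rw [norm_norm, norm_norm, hrec]
    rw [Real.norm_eq_abs, Real.norm_eq_abs, abs_mul]
    calc |kTerm a b z n| * |(a + n) / (b + n) * (z / (n + 1))|
        ≤ |kTerm a b z n| * (1/2) := by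
          exact mul_le_mul_of_nonneg_left hratio (abs_nonneg _)
      _ = 1/2 * |kTerm a b z n| := by ring
  exact summable_of_ratio_norm_eventually_le (r := 1/2) (by norm_num) key

theorem stmt_6 (a b x : ℝ) (hb : ∀ n : ℕ, b ≠ -(n : ℝ)) :
    Real.exp x * kummer a b (-x) = kummer (b - a) b x := by
  have hP : ∀ k : ℕ, (ascPochhammer ℝ k).eval b ≠ 0 := poch_ne_zero hb
  have hsum1 : Summable fun n : ℕ => ‖x ^ n / (n.factorial : ℝ)‖ := by
    have := Real.summable_pow_div_factorial |x|
    refine this.congr fun n => ?_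
    rw [Real.norm_eq_abs, abs_div, abs_pow, Nat.abs_cast]
  have hsum2 := kTerm_summable_norm a b (-x) hP
  have hexp : Real.exp x = ∑' n : ℕ, x ^ n / n.factorial := by
    rw [Real.exp_eq_exp_ℝ, NormedSpace.exp_eq_tsum_div]
  have hkum : kummer a b (-x) = ∑' n, kTerm a b (-x) n := rfl
  rw [hexp, hkum,
    tsum_mul_tsum_eq_tsum_sum_antidiagonal_of_summable_norm hsum1 hsum2]
  unfold kummer
  refine tsum_congr fun n => ?_
  rw [Finset.Nat.sum_antidiagonal_eq_sum_range_succ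
    (fun i j => x ^ i / (i.factorial : ℝ) * kTerm a b (-x) j)]
  rw [← Finset.sum_range_reflect]
  have hterm : ∀ j ∈ Finset.range (n + 1),
      (fun k => x ^ k / (k.factorial : ℝ) * kTerm a b (-x) (n - k)) (n + 1 - 1 - j) =
      (x ^ n / (n.factorial : ℝ) / (ascPochhammer ℝ n).eval b) *
        ((-1 : ℝ) ^ j * (n.choose j) * (ascPochhammer ℝ j).eval a *
          (ascPochhammer ℝ (n - j)).eval (b + j)) := by
    intro j hj
    have hj' : j ≤ n := Nat.lt_succ_iff.mp (Finset.mem_range.mp hj)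
    simp only [Nat.add_sub_cancel]
    have h1 : n - (n - j) = j := Nat.sub_sub_self hj'
    rw [h1]
    unfold kTerm
    have hx : x ^ (n - j) * x ^ j = x ^ n := by
      rw [← pow_add, Nat.sub_add_cancel hj']
    have hneg : (-x) ^ j = (-1 : ℝ) ^ j * x ^ j := by
      rw [neg_pow]
    have hfac : (n.factorial : ℝ) = (n.choose j) * j.factorial * (n - j).factorial := by
      rw [← Nat.choose_mul_factorial_mul_factorial hj']
      push_cast
      ring
    have hpb : (ascPochhammer ℝ n).eval b =
        (ascPochhammer ℝ j).eval b * (ascPochhammer ℝ (n - j)).eval (b + j) := poch_split b hj'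
    have h2 : (ascPochhammer ℝ j).eval b ≠ 0 := hP j
    have h3 : ((j.factorial : ℝ)) ≠ 0 := Nat.cast_ne_zero.mpr j.factorial_ne_zero
    have h4 : (((n - j).factorial : ℝ)) ≠ 0 := Nat.cast_ne_zero.mpr (n - j).factorial_ne_zero
    have h5 : ((n.choose j : ℝ)) ≠ 0 := Nat.cast_ne_zero.mpr (Nat.choose_pos hj').ne'
    have h6 : (ascPochhammer ℝ (n - j)).eval (b + j) ≠ 0 := by
      intro h
      exact hP n (by rw [hpb, h, mul_zero])
    rw [hneg, ← hx, hpb, hfac]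
    field_simp
  rw [Finset.sum_congr rfl hterm, ← Finset.mul_sum, vand n a b]
  field_simp
end

section
/- For α ∈ (1,2) and fixed v ≠ 0, the function v ↦ (2^{α/2} v/√π) Γ((α+1)/2) ₁F₁((2-α)/2; 3/2; v²/2) grows faster than any polynomial as |v| → ∞; in particular it is not Lipschitz continuous on ℝ. -/
open Real Filter

/-- The one-dimensional drift function for the Gaussian kinetic energy. -/
noncomputable def driftC (α v : ℝ) : ℝ :=
  (2 : ℝ) ^ (α / 2) * v / Real.sqrt Real.pi * Real.Gamma ((α + 1) / 2)
    * kummer ((2 - α) / 2) (3 / 2) (v ^ 2 / 2)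

lemma poch_mono {a b : ℝ} (ha : 0 < a) (hab : a ≤ b) (n : ℕ) :
    (ascPochhammer ℝ n).eval a ≤ (ascPochhammer ℝ n).eval b := by
  induction n with
  | zero => simp
  | succ n ih =>
      rw [ascPochhammer_succ_eval, ascPochhammer_succ_eval]
      have hb : 0 < b := lt_of_lt_of_le ha hab
      have hn : (0 : ℝ) ≤ n := Nat.cast_nonneg n
      exact mul_le_mul ih (by linarith) (by linarith) (ascPochhammer_pos n b hb).le

lemma kummer_summable {a b z : ℝ} (ha : 0 < a) (hab : a ≤ b) (hz : 0 ≤ z) :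
    Summable (fun n : ℕ =>
      ((ascPochhammer ℝ n).eval a / (ascPochhammer ℝ n).eval b) * z ^ n / n.factorial) := by
  have hb : 0 < b := lt_of_lt_of_le ha hab
  refine Summable.of_nonneg_of_le (fun n => ?_) (fun n => ?_)
    (Real.summable_pow_div_factorial z)
  · have h1 := (ascPochhammer_pos n a ha).le
    have h2 := (ascPochhammer_pos n b hb).le
    positivity
  · have h2 := ascPochhammer_pos n b hb
    have hr : (ascPochhammer ℝ n).eval a / (ascPochhammer ℝ n).eval b ≤ 1 :=
      (div_le_one h2).mpr (poch_mono ha hab n)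
    have hzn : (0 : ℝ) ≤ z ^ n := pow_nonneg hz n
    have : ((ascPochhammer ℝ n).eval a / (ascPochhammer ℝ n).eval b) * z ^ n ≤ 1 * z ^ n :=
      mul_le_mul_of_nonneg_right hr hzn
    have hfac : (0 : ℝ) < n.factorial := by positivity
    rw [one_mul] at this
    exact div_le_div_of_nonneg_right this hfac.le

lemma kummer_term_le {a b z : ℝ} (ha : 0 < a) (hab : a ≤ b) (hz : 0 ≤ z) (m : ℕ) :
    ((ascPochhammer ℝ m).eval a / (ascPochhammer ℝ m).eval b) * z ^ m / m.factorial
      ≤ kummer a b z := by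
  have hb : 0 < b := lt_of_lt_of_le ha hab
  refine Summable.le_tsum (kummer_summable ha hab hz) m (fun j _ => ?_)
  have h1 := (ascPochhammer_pos j a ha).le
  have h2 := (ascPochhammer_pos j b hb).le
  positivity

theorem stmt_8 (α : ℝ) (hα : α ∈ Set.Ioo 1 2) :
    (∀ n : ℕ, Filter.Tendsto (fun v : ℝ => |driftC α v| / v ^ n) Filter.atTop Filter.atTop) ∧
      ∀ K : NNReal, ¬ LipschitzWith K (driftC α) := by
  obtain ⟨hα1, hα2⟩ := hα
  set a : ℝ := (2 - α) / 2 with ha_def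
  have ha : 0 < a := by simp only [ha_def]; linarith
  have hab : a ≤ (3 : ℝ) / 2 := by simp only [ha_def]; linarith
  have hB : 0 < (2 : ℝ) ^ (α / 2) / Real.sqrt Real.pi * Real.Gamma ((α + 1) / 2) := by
    have h1 : (0 : ℝ) < (2 : ℝ) ^ (α / 2) := Real.rpow_pos_of_pos (by norm_num) _
    have h2 : 0 < Real.sqrt Real.pi := Real.sqrt_pos.mpr Real.pi_pos
    have h3 : 0 < Real.Gamma ((α + 1) / 2) := Real.Gamma_pos_of_pos (by linarith)
    positivity
  set B : ℝ := (2 : ℝ) ^ (α / 2) / Real.sqrt Real.pi * Real.Gamma ((α + 1) / 2) with hB_def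
  have main : ∀ n : ℕ, Filter.Tendsto (fun v : ℝ => |driftC α v| / v ^ n)
      Filter.atTop Filter.atTop := by
    intro n
    set c : ℝ := (ascPochhammer ℝ n).eval a / (ascPochhammer ℝ n).eval (3 / 2) / n.factorial
      with hc_def
    have hc : 0 < c := by
      have h1 := ascPochhammer_pos n a ha
      have h2 := ascPochhammer_pos n ((3 : ℝ) / 2) (by norm_num)
      have h3 : (0 : ℝ) < n.factorial := by positivity
      positivity
    have hK0 : 0 < B * (c / 2 ^ n) := by positivity
    refine tendsto_atTop_mono' atTop ?_
      ((tendsto_pow_atTop (Nat.succ_ne_zero n)).const_mul_atTop hK0)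
    filter_upwards [eventually_ge_atTop (1 : ℝ)] with v hv1
    have hv : (0 : ℝ) < v := by linarith
    have hz : (0 : ℝ) ≤ v ^ 2 / 2 := by positivity
    have hk : c * (v ^ 2 / 2) ^ n ≤ kummer a (3 / 2) (v ^ 2 / 2) := by
      have := kummer_term_le ha hab hz n
      calc c * (v ^ 2 / 2) ^ n
          = (ascPochhammer ℝ n).eval a / (ascPochhammer ℝ n).eval (3 / 2)
            * (v ^ 2 / 2) ^ n / n.factorial := by rw [hc_def]; ring
        _ ≤ _ := this
    have hd : driftC α v = B * v * kummer a (3 / 2) (v ^ 2 / 2) := by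
      rw [driftC, hB_def, ha_def]; ring
    have hle : B * (c / 2 ^ n) * v ^ (n + 1) * v ^ n ≤ driftC α v := by
      rw [hd]
      calc B * (c / 2 ^ n) * v ^ (n + 1) * v ^ n = B * v * (c * (v ^ 2 / 2) ^ n) := by rw [div_pow]; ring
        _ ≤ B * v * kummer a (3 / 2) (v ^ 2 / 2) :=
            mul_le_mul_of_nonneg_left hk (by positivity)
    rw [le_div_iff₀ (pow_pos hv n)]
    exact hle.trans (le_abs_self _)
  refine ⟨main, fun K h => ?_⟩
  have h1 := main 1
  obtain ⟨v, hv2, hv1⟩ := ((h1.eventually_ge_atTop ((K : ℝ) + 1)).and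
    (eventually_ge_atTop (1 : ℝ))).exists
  have hv : (0 : ℝ) < v := by linarith
  have h0 : driftC α 0 = 0 := by simp [driftC]
  have hlip := h.dist_le_mul v 0
  rw [h0, Real.dist_eq, Real.dist_eq, sub_zero, sub_zero] at hlip
  have habs : |driftC α v| ≤ (K : ℝ) * v := by
    rwa [abs_of_nonneg hv.le] at hlip
  have : |driftC α v| / v ^ 1 ≤ (K : ℝ) := by
    rw [pow_one, div_le_iff₀ hv]
    exact habs
  linarith
end

section
/- For α ∈ (0,1) and x > 0, the series (1/π) Σ_{n=1}^∞ ((-1)^{n+1}/n!) Γ(1+αn) sin(παn/2) / x^{αn+1} converges absolutely. -/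
open Real Filter

lemma gamma_le_fact_rpow (α : ℝ) (hα0 : 0 ≤ α) (hα1 : α ≤ 1) (n : ℕ) :
    Real.Gamma (1 + α * n) ≤ (Nat.factorial n : ℝ) ^ α := by
  have h1 : (1 : ℝ) ∈ Set.Ioi (0 : ℝ) := by norm_num
  have h2 : ((1 : ℝ) + n) ∈ Set.Ioi (0 : ℝ) := Set.mem_Ioi.2 (by positivity)
  have key := Real.convexOn_log_Gamma.2 h1 h2 (by linarith : (0:ℝ) ≤ 1 - α) hα0
    (by ring)
  simp only [smul_eq_mul, Function.comp_apply] at key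
  have hcomb : (1 - α) * 1 + α * (1 + n) = 1 + α * n := by ring
  rw [hcomb] at key
  have hg1 : Real.Gamma 1 = 1 := Real.Gamma_one
  have hgn : Real.Gamma (1 + n) = (Nat.factorial n : ℝ) := by
    rw [add_comm]; exact_mod_cast Real.Gamma_nat_eq_factorial n
  rw [hg1, hgn, Real.log_one, mul_zero, zero_add] at key
  have hpos : 0 < Real.Gamma (1 + α * n) :=
    Real.Gamma_pos_of_pos (by positivity)
  have hfpos : (0:ℝ) < (Nat.factorial n : ℝ) := by exact_mod_cast n.factorial_pos
  calc Real.Gamma (1 + α * n) = Real.exp (Real.log (Real.Gamma (1 + α * n))) :=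
        (Real.exp_log hpos).symm
    _ ≤ Real.exp (α * Real.log (Nat.factorial n)) := Real.exp_le_exp.2 key
    _ = (Nat.factorial n : ℝ) ^ α := by
        rw [Real.rpow_def_of_pos hfpos, mul_comm]

lemma summable_aux (α : ℝ) (hα1 : α < 1) (r : ℝ) (hr : 0 < r) :
    Summable (fun n : ℕ => ((Nat.factorial (n+1) : ℝ)) ^ (α - 1) * r ^ (n+1)) := by
  set f : ℕ → ℝ := fun n => ((Nat.factorial (n+1) : ℝ)) ^ (α - 1) * r ^ (n+1) with hf
  have hfpos : ∀ n, 0 < f n := fun n => by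
    have : (0:ℝ) < (Nat.factorial (n+1) : ℝ) := by exact_mod_cast (n+1).factorial_pos
    positivity
  apply summable_of_ratio_test_tendsto_lt_one (l := 0) one_pos
    (Eventually.of_forall fun n => (hfpos n).ne')
  have heq : (fun n : ℕ => ‖f (n+1)‖ / ‖f n‖) =
      fun n : ℕ => ((n:ℝ) + 2) ^ (α - 1) * r := by
    funext n
    have hfp : (0:ℝ) < (Nat.factorial (n+1) : ℝ) := by exact_mod_cast (n+1).factorial_pos
    have hfact : ((Nat.factorial (n+2) : ℝ)) = ((n:ℝ)+2) * (Nat.factorial (n+1) : ℝ) := by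
      rw [Nat.factorial_succ]; push_cast; ring
    rw [Real.norm_of_nonneg (hfpos (n+1)).le, Real.norm_of_nonneg (hfpos n).le]
    simp only [hf]
    rw [hfact, Real.mul_rpow (by positivity) hfp.le]
    have h1 : ((Nat.factorial (n+1) : ℝ)) ^ (α - 1) ≠ 0 := by positivity
    field_simp
    ring
  rw [heq]
  have h0 : Filter.Tendsto (fun n : ℕ => ((n:ℝ) + 2) ^ (α - 1)) atTop (nhds 0) := by
    have := (tendsto_rpow_neg_atTop (y := 1 - α) (by linarith)).comp
      (Filter.tendsto_atTop_add_const_right atTop (2:ℝ) tendsto_natCast_atTop_atTop)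
    simpa [neg_sub, Function.comp_def] using this
  simpa using h0.mul_const r

theorem stmt_17 (α : ℝ) (hα : α ∈ Set.Ioo 0 1) (x : ℝ) (hx : 0 < x) :
    Summable (fun n : ℕ =>
      |(1 / Real.pi) * ((-1 : ℝ) ^ ((n + 1) + 1) / (Nat.factorial (n + 1)))
        * Real.Gamma (1 + α * (n + 1)) * Real.sin (Real.pi * α * (n + 1) / 2)
        / x ^ (α * (n + 1) + 1)|) := by
  obtain ⟨hα0, hα1⟩ := hα
  set r : ℝ := x ^ (-α) with hr
  have hrpos : 0 < r := Real.rpow_pos_of_pos hx _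
  have hsum := (summable_aux α hα1 r hrpos).mul_left ((1 / Real.pi) * x⁻¹)
  apply Summable.of_nonneg_of_le (fun n => abs_nonneg _) _ hsum
  intro n
  have hfp : (0:ℝ) < (Nat.factorial (n+1) : ℝ) := by exact_mod_cast (n+1).factorial_pos
  have hgpos : 0 < Real.Gamma (1 + α * (n+1)) := Real.Gamma_pos_of_pos (by positivity)
  have hxp : 0 < x ^ (α * (n+1) + 1) := Real.rpow_pos_of_pos hx _
  have hG : Real.Gamma (1 + α * ((n:ℝ)+1)) ≤ ((Nat.factorial (n+1) : ℝ)) ^ α := by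
    have := gamma_le_fact_rpow α hα0.le hα1.le (n+1)
    push_cast at this ⊢
    exact this
  have habs : |(1 / Real.pi) * ((-1 : ℝ) ^ ((n + 1) + 1) / (Nat.factorial (n + 1)))
        * Real.Gamma (1 + α * (n + 1)) * Real.sin (Real.pi * α * (n + 1) / 2)
        / x ^ (α * (n + 1) + 1)|
      = (1 / Real.pi) * (1 / (Nat.factorial (n+1) : ℝ))
        * Real.Gamma (1 + α * (n + 1)) * |Real.sin (Real.pi * α * (n + 1) / 2)|
        / x ^ (α * (n + 1) + 1) := by
    simp only [abs_div, abs_mul, abs_pow, abs_neg, abs_one, one_pow, Nat.abs_cast,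
      abs_of_pos hgpos, abs_of_pos hxp, abs_of_pos Real.pi_pos]
  rw [habs]
  have hsin : |Real.sin (Real.pi * α * (n + 1) / 2)| ≤ 1 := Real.abs_sin_le_one _
  have hxsplit : x ^ (α * ((n:ℝ) + 1) + 1) = x * (x ^ α) ^ (n+1) := by
    rw [Real.rpow_add hx, Real.rpow_one, mul_comm,
      ← Real.rpow_natCast (x ^ α) (n+1), ← Real.rpow_mul hx.le]
    push_cast
    ring_nf
  calc (1 / Real.pi) * (1 / (Nat.factorial (n+1) : ℝ))
        * Real.Gamma (1 + α * (n + 1)) * |Real.sin (Real.pi * α * (n + 1) / 2)|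
        / x ^ (α * (n + 1) + 1)
      ≤ (1 / Real.pi) * (1 / (Nat.factorial (n+1) : ℝ))
        * ((Nat.factorial (n+1) : ℝ)) ^ α * 1 / x ^ (α * (n + 1) + 1) := by
        gcongr
      _ = (1 / Real.pi) * x⁻¹ * (((Nat.factorial (n+1) : ℝ)) ^ (α - 1) * r ^ (n+1)) := by
        rw [hxsplit]
        have h1 : ((Nat.factorial (n+1) : ℝ)) ^ (α - 1)
            = ((Nat.factorial (n+1) : ℝ)) ^ α / (Nat.factorial (n+1) : ℝ) := by
          rw [Real.rpow_sub hfp, Real.rpow_one]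
        have h2 : r ^ (n+1) = ((x ^ α) ^ (n+1))⁻¹ := by
          rw [hr, ← Real.rpow_natCast (x ^ (-α)) (n+1), ← Real.rpow_natCast (x ^ α) (n+1),
            ← Real.rpow_mul hx.le, ← Real.rpow_mul hx.le, ← Real.rpow_neg hx.le]
          ring_nf
        rw [h1, h2]
        have hxa : (0:ℝ) < (x ^ α) ^ (n+1) := by positivity
        field_simp
end
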